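/- (Ordered-sum composition theorem, basic case.) If M₁ = Σ_{i∈N} M_i¹ and M₂ = Σ_{i∈N} M_i² are ordered sums of linear orders over the same index linear order N, and for every i ∈ N the summands M_i¹ and M_i² satisfy the same monadic second-order sentences of quantifier depth ≤ n (with respect to a fixed finite signature of unary predicates), then M₁ and M₂ satisfy the same monadic second-order sentences of quantifier depth ≤ n. -/

import Mathlib

/-- Monadic second-order formulas over a linear order with `m` unary predicates,
`k` free element variables and `l` free set variables (de Bruijn indexed). -/
inductive MSO (m : ℕ) : ℕ → ℕ → Type
  | lt {k l : ℕ} (i j : Fin k) : MSO m k l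
  | eq {k l : ℕ} (i j : Fin k) : MSO m k l
  | mem {k l : ℕ} (i : Fin k) (X : Fin l) : MSO m k l
  | pred {k l : ℕ} (p : Fin m) (i : Fin k) : MSO m k l
  | not {k l : ℕ} (φ : MSO m k l) : MSO m k l
  | and {k l : ℕ} (φ ψ : MSO m k l) : MSO m k l
  | exElem {k l : ℕ} (φ : MSO m (k + 1) l) : MSO m k l
  | exSet {k l : ℕ} (φ : MSO m k (l + 1)) : MSO m k l

/-- Satisfaction of an MSO formula in a linear order `α` with unary predicates `P`. -/
def MSO.Sat {m : ℕ} {α : Type*} [LinearOrder α] (P : Fin m → Set α) :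
    ∀ {k l : ℕ}, MSO m k l → (Fin k → α) → (Fin l → Set α) → Prop
  | _, _, .lt i j, e, _ => e i < e j
  | _, _, .eq i j, e, _ => e i = e j
  | _, _, .mem i X, e, s => e i ∈ s X
  | _, _, .pred p i, e, _ => e i ∈ P p
  | _, _, .not φ, e, s => ¬ φ.Sat P e s
  | _, _, .and φ ψ, e, s => φ.Sat P e s ∧ ψ.Sat P e s
  | _, _, .exElem φ, e, s => ∃ a : α, φ.Sat P (Fin.cons a e) s
  | _, _, .exSet φ, e, s => ∃ A : Set α, φ.Sat P e (Fin.cons A s)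

/-- Quantifier depth of an MSO formula. -/
def MSO.depth {m : ℕ} : ∀ {k l : ℕ}, MSO m k l → ℕ
  | _, _, .not φ => φ.depth
  | _, _, .and φ ψ => max φ.depth ψ.depth
  | _, _, .exElem φ => φ.depth + 1
  | _, _, .exSet φ => φ.depth + 1
  | _, _, _ => 0

/-- Satisfaction of an MSO sentence (no free variables). -/
def MSO.SatS {m : ℕ} {α : Type*} [LinearOrder α] (P : Fin m → Set α) (φ : MSO m 0 0) : Prop :=
  φ.Sat P (fun i => i.elim0) (fun i => i.elim0)


namespace OSC

noncomputable def pb (p : Prop) : Bool := @decide p (Classical.propDecidable p)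

lemma pb_iff {p : Prop} : pb p = true ↔ p := by
  unfold pb; exact @decide_eq_true_iff p (Classical.propDecidable p)

lemma pb_eq_pb {p q : Prop} (h : p ↔ q) : pb p = pb q :=
  (@decide_eq_decide p q (Classical.propDecidable p) (Classical.propDecidable q)).mpr h

lemma pb_inj {p q : Prop} (h : pb p = pb q) : p ↔ q :=
  (@decide_eq_decide p q (Classical.propDecidable p) (Classical.propDecidable q)).mp h

def TT (m : ℕ) : ℕ → ℕ → ℕ → Type
  | 0, k, l => (Fin k → Fin k → Bool) × (Fin k → Fin k → Bool) ×
      (Fin k → Fin l → Bool) × (Fin m → Fin k → Bool)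
  | n+1, k, l => TT m n k l × (TT m n (k+1) l → Bool) × (TT m n k (l+1) → Bool)

noncomputable def TTi (m : ℕ) : ∀ (n k l : ℕ), Fintype (TT m n k l)
  | 0, k, l =>
    inferInstanceAs (Fintype ((Fin k → Fin k → Bool) × (Fin k → Fin k → Bool) ×
      (Fin k → Fin l → Bool) × (Fin m → Fin k → Bool)))
  | n+1, k, l =>
    letI := TTi m n k l; letI := TTi m n (k+1) l; letI := TTi m n k (l+1)
    letI := Classical.decEq (TT m n (k+1) l); letI := Classical.decEq (TT m n k (l+1))
    inferInstanceAs (Fintype (TT m n k l × (TT m n (k+1) l → Bool) × (TT m n k (l+1) → Bool)))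

noncomputable instance {m n k l : ℕ} : Fintype (TT m n k l) := TTi m n k l

instance TTne {m : ℕ} : ∀ {n k l : ℕ}, Nonempty (TT m n k l)
  | 0, _, _ => ⟨fun _ _ => true, fun _ _ => true, fun _ _ => true, fun _ _ => true⟩
  | n+1, _, _ => ⟨(TTne (n := n)).some, fun _ => true, fun _ => true⟩

/-- enumeration of all elements of `TT m n k l` -/
noncomputable def TTlist (m n k l : ℕ) : List (TT m n k l) := (Finset.univ (α := TT m n k l)).toList

lemma mem_TTlist {m n k l : ℕ} (τ : TT m n k l) : τ ∈ TTlist m n k l :=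
  Finset.mem_toList.mpr (Finset.mem_univ τ)

lemma TTlist_ne_nil {m n k l : ℕ} : TTlist m n k l ≠ [] := by
  intro h
  exact (List.ne_nil_of_mem (mem_TTlist (TTne (m := m) (n := n) (k := k) (l := l)).some)) h

lemma TT00_subsingleton {m l : ℕ} (τ τ' : TT m 0 0 l) : τ = τ' := by
  obtain ⟨a, b, c, d⟩ := τ; obtain ⟨a', b', c', d'⟩ := τ'
  refine Prod.ext ?_ (Prod.ext ?_ (Prod.ext ?_ ?_)) <;> funext x <;> first
    | exact x.elim0
    | (funext y; exact y.elim0)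

noncomputable def typeOf {m : ℕ} {α : Type*} [LinearOrder α] (P : Fin m → Set α) :
    ∀ (n : ℕ) {k l : ℕ}, (Fin k → α) → (Fin l → Set α) → TT m n k l
  | 0, _, _, e, s =>
      ⟨fun i j => pb (e i < e j), fun i j => pb (e i = e j),
       fun i X => pb (e i ∈ s X), fun p i => pb (e i ∈ P p)⟩
  | n+1, _, _, e, s =>
      ⟨typeOf P n e s,
       fun τ => pb (∃ a, typeOf P n (Fin.cons a e) s = τ),
       fun τ => pb (∃ A, typeOf P n e (Fin.cons A s) = τ)⟩


def Eqv {m : ℕ} {α β : Type*} [LinearOrder α] [LinearOrder β]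
    (P : Fin m → Set α) (Q : Fin m → Set β) (n : ℕ) {k l : ℕ}
    (e : Fin k → α) (f : Fin k → β) (s : Fin l → Set α) (t : Fin l → Set β) : Prop :=
  ∀ φ : MSO m k l, φ.depth ≤ n → (φ.Sat P e s ↔ φ.Sat Q f t)

lemma Eqv.mono {m : ℕ} {α β : Type*} [LinearOrder α] [LinearOrder β]
    {P : Fin m → Set α} {Q : Fin m → Set β} {n n' : ℕ} {k l : ℕ}
    {e : Fin k → α} {f : Fin k → β} {s : Fin l → Set α} {t : Fin l → Set β}
    (h : Eqv P Q n e f s t) (hle : n' ≤ n) : Eqv P Q n' e f s t :=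
  fun φ hd => h φ (hd.trans hle)

lemma Eqv.symm {m : ℕ} {α β : Type*} [LinearOrder α] [LinearOrder β]
    {P : Fin m → Set α} {Q : Fin m → Set β} {n : ℕ} {k l : ℕ}
    {e : Fin k → α} {f : Fin k → β} {s : Fin l → Set α} {t : Fin l → Set β}
    (h : Eqv P Q n e f s t) : Eqv Q P n f e t s :=
  fun φ hd => (h φ hd).symm

lemma Eqv.comp_cast {m : ℕ} {α β : Type*} [LinearOrder α] [LinearOrder β]
    {P : Fin m → Set α} {Q : Fin m → Set β} {n : ℕ} {k k' l : ℕ}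
    {e : Fin k → α} {f : Fin k → β} {s : Fin l → Set α} {t : Fin l → Set β}
    (hk : k' = k) (h : Eqv P Q n e f s t) :
    Eqv P Q n (e ∘ Fin.cast hk) (f ∘ Fin.cast hk) s t := by
  subst hk; simpa [Fin.cast_refl] using h

lemma typeOf_down {m : ℕ} {α β : Type*} [LinearOrder α] [LinearOrder β]
    {P : Fin m → Set α} {Q : Fin m → Set β} {n k l : ℕ}
    {e : Fin k → α} {f : Fin k → β} {s : Fin l → Set α} {t : Fin l → Set β}
    (h : typeOf P (n+1) e s = typeOf Q (n+1) f t) : typeOf P n e s = typeOf Q n f t := by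
  have := congrArg Prod.fst h
  simpa [typeOf] using this

lemma typeOf_mono {m : ℕ} {α β : Type*} [LinearOrder α] [LinearOrder β]
    {P : Fin m → Set α} {Q : Fin m → Set β} {n n' k l : ℕ}
    {e : Fin k → α} {f : Fin k → β} {s : Fin l → Set α} {t : Fin l → Set β}
    (h : typeOf P n e s = typeOf Q n f t) (hle : n' ≤ n) :
    typeOf P n' e s = typeOf Q n' f t := by
  obtain ⟨d, rfl⟩ := Nat.exists_eq_add_of_le hle
  clear hle
  induction d with
  | zero => exact h
  | succ d ih => exact ih (typeOf_down h)

lemma satTransfer {m : ℕ} {α β : Type*} [LinearOrder α] [LinearOrder β]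
    (P : Fin m → Set α) (Q : Fin m → Set β) :
    ∀ {k l : ℕ} (φ : MSO m k l) (n : ℕ) (e : Fin k → α) (f : Fin k → β)
      (s : Fin l → Set α) (t : Fin l → Set β),
      φ.depth ≤ n → typeOf P n e s = typeOf Q n f t →
      (φ.Sat P e s ↔ φ.Sat Q f t) := by
  intro k l φ
  induction φ with
  | lt i j =>
    intro n e f s t _ h
    have h0 := typeOf_mono h (Nat.zero_le n)
    have := congrFun (congrFun (congrArg (fun x => x.1) h0) i) j
    exact pb_inj (by simpa [typeOf, MSO.Sat] using this)
  | eq i j =>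
    intro n e f s t _ h
    have h0 := typeOf_mono h (Nat.zero_le n)
    have := congrFun (congrFun (congrArg (fun x => x.2.1) h0) i) j
    exact pb_inj (by simpa [typeOf, MSO.Sat] using this)
  | mem i X =>
    intro n e f s t _ h
    have h0 := typeOf_mono h (Nat.zero_le n)
    have := congrFun (congrFun (congrArg (fun x => x.2.2.1) h0) i) X
    exact pb_inj (by simpa [typeOf, MSO.Sat] using this)
  | pred p i =>
    intro n e f s t _ h
    have h0 := typeOf_mono h (Nat.zero_le n)
    have := congrFun (congrFun (congrArg (fun x => x.2.2.2) h0) p) i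
    exact pb_inj (by simpa [typeOf, MSO.Sat] using this)
  | not ψ ih =>
    intro n e f s t hd h
    have := ih n e f s t (by simpa [MSO.depth] using hd) h
    simp [MSO.Sat, this]
  | and ψ χ ih ih' =>
    intro n e f s t hd h
    simp only [MSO.depth, max_le_iff] at hd
    have h1 := ih n e f s t hd.1 h
    have h2 := ih' n e f s t hd.2 h
    simp [MSO.Sat, h1, h2]
  | exElem ψ ih =>
    intro n e f s t hd h
    have hd' : ψ.depth + 1 ≤ n := hd
    have h' := typeOf_mono h hd'
    have hcomp := congrArg (fun x => x.2.1) h'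
    simp only [typeOf] at hcomp
    constructor
    · rintro ⟨a, ha⟩
      have h1 : pb (∃ a', typeOf P ψ.depth (Fin.cons a' e) s = typeOf P ψ.depth (Fin.cons a e) s) = true :=
        pb_iff.mpr ⟨a, rfl⟩
      rw [congrFun hcomp (typeOf P ψ.depth (Fin.cons a e) s)] at h1
      obtain ⟨b, hb⟩ := pb_iff.mp h1
      exact ⟨b, (ih ψ.depth (Fin.cons a e) (Fin.cons b f) s t le_rfl hb.symm).mp ha⟩
    · rintro ⟨b, hb⟩
      have h1 : pb (∃ b', typeOf Q ψ.depth (Fin.cons b' f) t = typeOf Q ψ.depth (Fin.cons b f) t) = true :=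
        pb_iff.mpr ⟨b, rfl⟩
      rw [← congrFun hcomp (typeOf Q ψ.depth (Fin.cons b f) t)] at h1
      obtain ⟨a, ha⟩ := pb_iff.mp h1
      exact ⟨a, (ih ψ.depth (Fin.cons a e) (Fin.cons b f) s t le_rfl ha).mpr hb⟩
  | exSet ψ ih =>
    intro n e f s t hd h
    have hd' : ψ.depth + 1 ≤ n := hd
    have h' := typeOf_mono h hd'
    have hcomp := congrArg (fun x => x.2.2) h'
    simp only [typeOf] at hcomp
    constructor
    · rintro ⟨A, hA⟩
      have h1 : pb (∃ A', typeOf P ψ.depth e (Fin.cons A' s) = typeOf P ψ.depth e (Fin.cons A s)) = true :=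
        pb_iff.mpr ⟨A, rfl⟩
      rw [congrFun hcomp (typeOf P ψ.depth e (Fin.cons A s))] at h1
      obtain ⟨B, hB⟩ := pb_iff.mp h1
      exact ⟨B, (ih ψ.depth e f (Fin.cons A s) (Fin.cons B t) le_rfl hB.symm).mp hA⟩
    · rintro ⟨B, hB⟩
      have h1 : pb (∃ B', typeOf Q ψ.depth f (Fin.cons B' t) = typeOf Q ψ.depth f (Fin.cons B t)) = true :=
        pb_iff.mpr ⟨B, rfl⟩
      rw [← congrFun hcomp (typeOf Q ψ.depth f (Fin.cons B t))] at h1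
      obtain ⟨A, hA⟩ := pb_iff.mp h1
      exact ⟨A, (ih ψ.depth e f (Fin.cons A s) (Fin.cons B t) le_rfl hA).mpr hB⟩

lemma eqv_of_typeOf {m : ℕ} {α β : Type*} [LinearOrder α] [LinearOrder β]
    {P : Fin m → Set α} {Q : Fin m → Set β} {n k l : ℕ}
    {e : Fin k → α} {f : Fin k → β} {s : Fin l → Set α} {t : Fin l → Set β}
    (h : typeOf P n e s = typeOf Q n f t) : Eqv P Q n e f s t :=
  fun φ hd => satTransfer P Q φ n e f s t hd h


def falseF (m k l : ℕ) : MSO m k l := .exElem (.lt 0 0)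

lemma sat_falseF {m k l : ℕ} {α : Type*} [LinearOrder α] (P : Fin m → Set α)
    (e : Fin k → α) (s : Fin l → Set α) : ¬ (falseF m k l).Sat P e s := by
  rintro ⟨a, ha⟩
  exact lt_irrefl _ ha

lemma depth_falseF {m k l : ℕ} : (falseF m k l).depth = 1 := rfl

def pol {m k l : ℕ} (b : Bool) (φ : MSO m k l) : MSO m k l := if b then φ else φ.not

lemma depth_pol {m k l : ℕ} (b : Bool) (φ : MSO m k l) : (pol b φ).depth = φ.depth := by
  cases b <;> rfl

lemma sat_pol_pb {m k l : ℕ} {α : Type*} [LinearOrder α] {P : Fin m → Set α}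
    {e : Fin k → α} {s : Fin l → Set α} {φ : MSO m k l} {p : Prop}
    (h : φ.Sat P e s ↔ p) : (pol (pb p) φ).Sat P e s := by
  by_cases hp : p
  · rw [show pb p = true from pb_iff.mpr hp]; exact h.mpr hp
  · rw [show pb p = false from by
      rcases Bool.eq_false_or_eq_true (pb p) with h' | h'
      · exact absurd (pb_iff.mp h') hp
      · exact h']
    exact fun hs => hp (h.mp hs)

lemma pol_sat_forward {m k l : ℕ} {α : Type*} [LinearOrder α] {P : Fin m → Set α}
    {e : Fin k → α} {s : Fin l → Set α} {φ : MSO m k l} {b : Bool}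
    (h : (pol b φ).Sat P e s) : φ.Sat P e s ↔ b = true := by
  cases b
  · simp only [pol, if_neg] at h
    exact iff_of_false h (by simp)
  · exact iff_of_true (by simpa [pol] using h) rfl

lemma pb_eq_of {p : Prop} {b : Bool} (h : p ↔ b = true) : pb p = b := by
  cases b
  · rcases Bool.eq_false_or_eq_true (pb p) with h' | h'
    · exact absurd (h.mp (pb_iff.mp h')) (by simp)
    · exact h' 
  · exact pb_iff.mpr (h.mpr rfl)

/-- conjunction with default seed `0 = 0` (usable whenever there is ≥ 1 element var) -/
def conjD {m k l : ℕ} (L : List (MSO m (k+1) l)) : MSO m (k+1) l :=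
  List.foldr .and (.eq 0 0) L

lemma depth_foldr {m k l : ℕ} (φ₀ : MSO m k l) (L : List (MSO m k l)) {n : ℕ}
    (h0 : φ₀.depth ≤ n) (h : ∀ ψ ∈ L, ψ.depth ≤ n) :
    (List.foldr MSO.and φ₀ L).depth ≤ n := by
  induction L with
  | nil => exact h0
  | cons ψ L ih =>
    simp only [List.foldr_cons]
    have : (MSO.and ψ (List.foldr MSO.and φ₀ L)).depth = max ψ.depth (List.foldr MSO.and φ₀ L).depth := rfl
    rw [this]
    exact max_le (h ψ (by simp)) (ih (fun ψ' hψ' => h ψ' (by simp [hψ'])))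

lemma sat_foldr {m k l : ℕ} {α : Type*} [LinearOrder α] {P : Fin m → Set α}
    {e : Fin k → α} {s : Fin l → Set α} (φ₀ : MSO m k l) (L : List (MSO m k l)) :
    (List.foldr MSO.and φ₀ L).Sat P e s ↔ (φ₀.Sat P e s ∧ ∀ ψ ∈ L, ψ.Sat P e s) := by
  induction L with
  | nil => simp
  | cons ψ L ih =>
    simp only [List.foldr_cons]
    constructor
    · rintro ⟨h1, h2⟩
      obtain ⟨h3, h4⟩ := ih.mp h2
      exact ⟨h3, by intro ψ' hψ'; rcases List.mem_cons.mp hψ' with rfl | hm; exact h1; exact h4 _ hm⟩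
    · rintro ⟨h1, h2⟩
      exact ⟨h2 ψ (by simp), ih.mpr ⟨h1, fun ψ' h' => h2 _ (by simp [h'])⟩⟩

lemma sat_conjD {m k l : ℕ} {α : Type*} [LinearOrder α] {P : Fin m → Set α}
    {e : Fin (k+1) → α} {s : Fin l → Set α} (L : List (MSO m (k+1) l)) :
    (conjD L).Sat P e s ↔ ∀ ψ ∈ L, ψ.Sat P e s := by
  rw [conjD, sat_foldr]
  simp only [and_iff_right_iff_imp]
  intro _
  rfl

def setPiece {m k l : ℕ} (b : Bool) (L : List (MSO m k (l+1))) : List (MSO m k l) :=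
  match L with
  | [] => if b then [] else [falseF m k l]
  | φ :: rest => [pol b (.exSet (List.foldr .and φ rest))]

noncomputable def formOfL {m : ℕ} : ∀ (n : ℕ) {k l : ℕ}, TT m n k l → List (MSO m k l)
  | 0, k, l, τ =>
      ((List.finRange k).flatMap fun i => (List.finRange k).map fun j => pol (τ.1 i j) (.lt i j)) ++
      ((List.finRange k).flatMap fun i => (List.finRange k).map fun j => pol (τ.2.1 i j) (.eq i j)) ++
      ((List.finRange k).flatMap fun i => (List.finRange l).map fun X => pol (τ.2.2.1 i X) (.mem i X)) ++
      ((List.finRange m).flatMap fun p => (List.finRange k).map fun i => pol (τ.2.2.2 p i) (.pred p i))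
  | n+1, k, l, τ =>
      formOfL n τ.1 ++
      ((TTlist m n (k+1) l).map fun τ' => pol (τ.2.1 τ') (.exElem (conjD (formOfL n τ')))) ++
      ((TTlist m n k (l+1)).flatMap fun τ' => setPiece (τ.2.2 τ') (formOfL n τ'))

lemma depth_formOfL {m : ℕ} : ∀ (n : ℕ) {k l : ℕ} (τ : TT m n k l),
    ∀ φ ∈ formOfL n τ, φ.depth ≤ n := by
  intro n
  induction n with
  | zero =>
    intro k l τ φ hφ
    simp only [formOfL, List.mem_append, List.mem_flatMap, List.mem_map] at hφ
    rcases hφ with (((⟨i, _, j, _, rfl⟩ | ⟨i, _, j, _, rfl⟩) | ⟨i, _, X, _, rfl⟩) | ⟨p, _, i, _, rfl⟩) <;>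
      simp [depth_pol, MSO.depth]
  | succ n ih =>
    intro k l τ φ hφ
    simp only [formOfL, List.mem_append, List.mem_flatMap, List.mem_map] at hφ
    rcases hφ with ((h1 | ⟨τ', _, rfl⟩) | ⟨τ', _, hsp⟩)
    · exact (ih τ.1 φ h1).trans (Nat.le_succ n)
    · rw [depth_pol]
      show (conjD (formOfL n τ')).depth + 1 ≤ n + 1
      exact Nat.succ_le_succ (depth_foldr _ _ (by simp [MSO.depth]) (ih τ'))
    · rcases hL : formOfL n τ' with _ | ⟨ψ, rest⟩ <;> rw [hL] at hsp
      · simp only [setPiece] at hsp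
        rcases Bool.eq_false_or_eq_true (τ.2.2 τ') with hb | hb <;> rw [hb] at hsp <;> simp at hsp
        subst hsp
        simp [depth_falseF]
      · simp only [setPiece, List.mem_singleton] at hsp
        subst hsp
        rw [depth_pol]
        show (List.foldr MSO.and ψ rest).depth + 1 ≤ n + 1
        refine Nat.succ_le_succ (depth_foldr _ _ ?_ ?_) <;>
          intros <;> first
            | exact ih τ' ψ (by rw [hL]; simp)
            | exact ih τ' _ (by rw [hL]; simp; right; assumption)

lemma formOfL_eq_nil {m : ℕ} : ∀ {n k l : ℕ} (τ : TT m n k l),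
    formOfL n τ = [] → n = 0 ∧ k = 0 := by
  intro n k l τ h
  match n, k with
  | 0, 0 => exact ⟨rfl, rfl⟩
  | 0, k+1 =>
    exfalso
    have : pol (τ.2.1 0 0) (.eq 0 0) ∈ formOfL (m := m) 0 τ := by
      simp only [formOfL, List.mem_append, List.mem_flatMap, List.mem_map]
      exact Or.inl (Or.inl (Or.inr ⟨0, List.mem_finRange 0, 0, List.mem_finRange 0, rfl⟩))
    rw [h] at this; exact List.not_mem_nil this
  | n+1, k =>
    exfalso
    obtain ⟨τ₀, hτ₀⟩ : ∃ τ₀, τ₀ ∈ TTlist m n (k+1) l := ⟨_, mem_TTlist (TTne).some⟩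
    have : pol (τ.2.1 τ₀) (.exElem (conjD (formOfL n τ₀))) ∈ formOfL (n+1) τ := by
      simp only [formOfL, List.mem_append, List.mem_map]
      exact Or.inl (Or.inr ⟨τ₀, hτ₀, rfl⟩)
    rw [h] at this; exact List.not_mem_nil this

lemma typeOf_of_nil {m : ℕ} {n k l : ℕ} (τ : TT m n k l) (h : formOfL n τ = [])
    {α : Type*} [LinearOrder α] (P : Fin m → Set α) (e : Fin k → α) (s : Fin l → Set α) :
    typeOf P n e s = τ := by
  obtain ⟨rfl, rfl⟩ := formOfL_eq_nil τ h
  exact TT00_subsingleton _ _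


universe u

lemma TT0_ext {m k l : ℕ} {a b : TT m 0 k l} (h1 : a.1 = b.1) (h2 : a.2.1 = b.2.1)
    (h3 : a.2.2.1 = b.2.2.1) (h4 : a.2.2.2 = b.2.2.2) : a = b :=
  Prod.ext h1 (Prod.ext h2 (Prod.ext h3 h4))

lemma TTsucc_ext {m n k l : ℕ} {a b : TT m (n+1) k l} (h1 : a.1 = b.1)
    (h2 : a.2.1 = b.2.1) (h3 : a.2.2 = b.2.2) : a = b :=
  Prod.ext h1 (Prod.ext h2 h3)

lemma F12 {m : ℕ} : ∀ n : ℕ,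
    (∀ {k l : ℕ} {α : Type u} [LinearOrder α] (P : Fin m → Set α) (e : Fin k → α)
        (s : Fin l → Set α), ∀ φ ∈ formOfL n (typeOf P n e s), φ.Sat P e s) ∧
    (∀ {k l : ℕ} {β : Type u} [LinearOrder β] (Q : Fin m → Set β) (f : Fin k → β)
        (t : Fin l → Set β) (τ : TT m n k l),
        (∀ φ ∈ formOfL n τ, φ.Sat Q f t) → typeOf Q n f t = τ) := by
  intro n
  induction n with
  | zero =>
    constructor
    · intro k l α _ P e s φ hφ
      simp only [formOfL, List.mem_append, List.mem_flatMap, List.mem_map] at hφ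
      rcases hφ with (((⟨i, _, j, _, rfl⟩ | ⟨i, _, j, _, rfl⟩) | ⟨i, _, X, _, rfl⟩) | ⟨p, _, i, _, rfl⟩) <;>
        exact sat_pol_pb Iff.rfl
    · intro k l β _ Q f t τ hSat
      refine TT0_ext ?_ ?_ ?_ ?_
      · funext i j
        have hmem : pol (τ.1 i j) (.lt i j) ∈ formOfL (m := m) 0 τ := by
          simp only [formOfL, List.mem_append, List.mem_flatMap, List.mem_map]
          exact Or.inl (Or.inl (Or.inl ⟨i, List.mem_finRange i, j, List.mem_finRange j, rfl⟩))
        exact pb_eq_of (pol_sat_forward (hSat _ hmem))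
      · funext i j
        have hmem : pol (τ.2.1 i j) (.eq i j) ∈ formOfL (m := m) 0 τ := by
          simp only [formOfL, List.mem_append, List.mem_flatMap, List.mem_map]
          exact Or.inl (Or.inl (Or.inr ⟨i, List.mem_finRange i, j, List.mem_finRange j, rfl⟩))
        exact pb_eq_of (pol_sat_forward (hSat _ hmem))
      · funext i X
        have hmem : pol (τ.2.2.1 i X) (.mem i X) ∈ formOfL (m := m) 0 τ := by
          simp only [formOfL, List.mem_append, List.mem_flatMap, List.mem_map]
          exact Or.inl (Or.inr ⟨i, List.mem_finRange i, X, List.mem_finRange X, rfl⟩)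
        exact pb_eq_of (pol_sat_forward (hSat _ hmem))
      · funext p i
        have hmem : pol (τ.2.2.2 p i) (.pred p i) ∈ formOfL (m := m) 0 τ := by
          simp only [formOfL, List.mem_append, List.mem_flatMap, List.mem_map]
          exact Or.inr ⟨p, List.mem_finRange p, i, List.mem_finRange i, rfl⟩
        exact pb_eq_of (pol_sat_forward (hSat _ hmem))
  | succ n ih =>
    constructor
    · intro k l α inst P e s φ hφ
      simp only [formOfL, List.mem_append, List.mem_flatMap, List.mem_map] at hφ
      rcases hφ with ((h1 | ⟨τ', hτ', rfl⟩) | ⟨τ', hτ', hsp⟩)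
      · exact ih.1 P e s φ h1
      · have hcomp : (typeOf P (n+1) e s).2.1 τ' = pb (∃ a, typeOf P n (Fin.cons a e) s = τ') := rfl
        rw [hcomp]
        refine sat_pol_pb ?_
        constructor
        · rintro ⟨a, hc⟩
          exact ⟨a, ih.2 P (Fin.cons a e) s τ' ((sat_conjD _).mp hc)⟩
        · rintro ⟨a, ha⟩
          exact ⟨a, (sat_conjD _).mpr (by rw [← ha]; exact fun ψ hψ => ih.1 P (Fin.cons a e) s ψ hψ)⟩
      · have hcomp : (typeOf P (n+1) e s).2.2 τ' = pb (∃ A, typeOf P n e (Fin.cons A s) = τ') := rfl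
        rw [hcomp] at hsp
        rcases hL : formOfL n τ' with _ | ⟨ψ, rest⟩ <;> rw [hL] at hsp
        · have hb : pb (∃ A, typeOf P n e (Fin.cons A s) = τ') = true :=
            pb_iff.mpr ⟨∅, typeOf_of_nil τ' hL P e (Fin.cons ∅ s)⟩
          rw [hb] at hsp
          simp [setPiece] at hsp
        · simp only [setPiece, List.mem_singleton] at hsp
          subst hsp
          refine sat_pol_pb ?_
          constructor
          · rintro ⟨A, hA⟩
            rw [sat_foldr] at hA
            refine ⟨A, ih.2 P e (Fin.cons A s) τ' ?_⟩
            intro ψ' hψ'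
            rw [hL] at hψ'
            rcases List.mem_cons.mp hψ' with rfl | hm
            · exact hA.1
            · exact hA.2 _ hm
          · rintro ⟨A, hA⟩
            refine ⟨A, (sat_foldr _ _).mpr ⟨?_, ?_⟩⟩
            · exact ih.1 P e (Fin.cons A s) ψ (by rw [hA, hL]; simp)
            · intro ψ' hψ'
              exact ih.1 P e (Fin.cons A s) ψ' (by rw [hA, hL]; simp [hψ'])
    · intro k l β inst Q f t τ hSat
      have hA : ∀ φ ∈ formOfL n τ.1, φ.Sat Q f t := fun φ h =>
        hSat φ (by simp only [formOfL, List.mem_append]; exact Or.inl (Or.inl h))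
      refine TTsucc_ext (ih.2 Q f t τ.1 hA) ?_ ?_
      · show (fun τ' => pb (∃ b, typeOf Q n (Fin.cons b f) t = τ')) = τ.2.1
        funext τ'
        have hmem : pol (τ.2.1 τ') (.exElem (conjD (formOfL n τ'))) ∈ formOfL (n+1) τ := by
          simp only [formOfL, List.mem_append, List.mem_map]
          exact Or.inl (Or.inr ⟨τ', mem_TTlist τ', rfl⟩)
        have hs := hSat _ hmem
        refine pb_eq_of ?_
        constructor
        · rintro ⟨b, hb⟩
          have hsx : (MSO.exElem (conjD (formOfL n τ'))).Sat Q f t :=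
            ⟨b, (sat_conjD _).mpr (by rw [← hb]; exact fun ψ h => ih.1 Q (Fin.cons b f) t ψ h)⟩
          exact (pol_sat_forward hs).mp hsx
        · intro hbtrue
          have hsx : (MSO.exElem (conjD (formOfL n τ'))).Sat Q f t := (pol_sat_forward hs).mpr hbtrue
          obtain ⟨b, hb⟩ := hsx
          exact ⟨b, ih.2 Q (Fin.cons b f) t τ' ((sat_conjD _).mp hb)⟩
      · show (fun τ' => pb (∃ A, typeOf Q n f (Fin.cons A t) = τ')) = τ.2.2
        funext τ'
        rcases hL : formOfL n τ' with _ | ⟨ψ, rest⟩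
        · rcases Bool.eq_false_or_eq_true (τ.2.2 τ') with hb | hb
          · rw [hb]
            exact pb_iff.mpr ⟨∅, typeOf_of_nil τ' hL Q f (Fin.cons ∅ t)⟩
          · exfalso
            have hmem : falseF m k l ∈ formOfL (n+1) τ := by
              simp only [formOfL, List.mem_append, List.mem_flatMap]
              exact Or.inr ⟨τ', mem_TTlist τ', by rw [hL]; simp [setPiece, hb]⟩
            exact sat_falseF Q f t (hSat _ hmem)
        · have hmem : pol (τ.2.2 τ') (.exSet (List.foldr .and ψ rest)) ∈ formOfL (n+1) τ := by
            simp only [formOfL, List.mem_append, List.mem_flatMap]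
            exact Or.inr ⟨τ', mem_TTlist τ', by rw [hL]; simp [setPiece]⟩
          have hs := hSat _ hmem
          refine pb_eq_of ?_
          constructor
          · rintro ⟨A, hA⟩
            have hsx : (MSO.exSet (List.foldr .and ψ rest)).Sat Q f t := by
              refine ⟨A, (sat_foldr _ _).mpr ⟨?_, ?_⟩⟩
              · exact ih.1 Q f (Fin.cons A t) ψ (by rw [hA, hL]; simp)
              · intro ψ' hψ'
                exact ih.1 Q f (Fin.cons A t) ψ' (by rw [hA, hL]; simp [hψ'])
            exact (pol_sat_forward hs).mp hsx
          · intro hbtrue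
            obtain ⟨A, hA⟩ := (pol_sat_forward hs).mpr hbtrue
            rw [sat_foldr] at hA
            refine ⟨A, ih.2 Q f (Fin.cons A t) τ' ?_⟩
            intro ψ' hψ'
            rw [hL] at hψ'
            rcases List.mem_cons.mp hψ' with rfl | hm
            · exact hA.1
            · exact hA.2 _ hm

lemma extElem {m k l n : ℕ} {α β : Type u} [LinearOrder α] [LinearOrder β]
    {P : Fin m → Set α} {Q : Fin m → Set β} {e : Fin k → α} {f : Fin k → β}
    {s : Fin l → Set α} {t : Fin l → Set β}
    (h : Eqv P Q (n+1) e f s t) (a : α) :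
    ∃ b : β, Eqv P Q n (Fin.cons a e) (Fin.cons b f) s t := by
  set τ := typeOf P n (Fin.cons a e) s with hτ
  have hφd : (MSO.exElem (conjD (formOfL n τ))).depth ≤ n + 1 := by
    show (conjD (formOfL n τ)).depth + 1 ≤ n + 1
    exact Nat.succ_le_succ (depth_foldr _ _ (by simp [MSO.depth]) (depth_formOfL n τ))
  have hsat : (MSO.exElem (conjD (formOfL n τ))).Sat P e s :=
    ⟨a, (sat_conjD _).mpr (fun ψ hψ => (F12 n).1 P (Fin.cons a e) s ψ hψ)⟩
  obtain ⟨b, hb⟩ := (h _ hφd).mp hsat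
  refine ⟨b, eqv_of_typeOf ?_⟩
  exact ((F12 n).2 Q (Fin.cons b f) t τ ((sat_conjD _).mp hb)).symm

lemma extSet {m k l n : ℕ} {α β : Type u} [LinearOrder α] [LinearOrder β]
    {P : Fin m → Set α} {Q : Fin m → Set β} {e : Fin k → α} {f : Fin k → β}
    {s : Fin l → Set α} {t : Fin l → Set β}
    (h : Eqv P Q (n+1) e f s t) (A : Set α) :
    ∃ B : Set β, Eqv P Q n e f (Fin.cons A s) (Fin.cons B t) := by
  rcases hL : formOfL n (typeOf P n e (Fin.cons A s)) with _ | ⟨ψ, rest⟩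
  · exact ⟨∅, eqv_of_typeOf (typeOf_of_nil _ hL Q f (Fin.cons ∅ t)).symm⟩
  · have hmem : ∀ ψ' ∈ List.foldr MSO.and ψ rest :: ([] : List (MSO m k (l+1))), True := fun _ _ => trivial
    have hφd : (MSO.exSet (List.foldr MSO.and ψ rest)).depth ≤ n + 1 := by
      show (List.foldr MSO.and ψ rest).depth + 1 ≤ n + 1
      refine Nat.succ_le_succ (depth_foldr _ _ ?_ ?_)
      · exact depth_formOfL n _ ψ (by rw [hL]; simp)
      · intro ψ' hψ'
        exact depth_formOfL n _ ψ' (by rw [hL]; simp [hψ'])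
    have hsat : (MSO.exSet (List.foldr MSO.and ψ rest)).Sat P e s := by
      refine ⟨A, (sat_foldr _ _).mpr ⟨?_, ?_⟩⟩
      · exact (F12 n).1 P e (Fin.cons A s) ψ (by rw [hL]; simp)
      · intro ψ' hψ'
        exact (F12 n).1 P e (Fin.cons A s) ψ' (by rw [hL]; simp [hψ'])
    obtain ⟨B, hB⟩ := (h _ hφd).mp hsat
    rw [sat_foldr] at hB
    refine ⟨B, eqv_of_typeOf (Eq.symm ((F12 n).2 Q f (Fin.cons B t) _ ?_))⟩
    intro ψ' hψ'
    rw [hL] at hψ'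
    rcases List.mem_cons.mp hψ' with rfl | hm
    · exact hB.1
    · exact hB.2 _ hm


section Main

set_option linter.unusedSectionVars false

variable {N : Type u} [LinearOrder N]

lemma lex_lt_iff {M : N → Type u} [∀ i, LinearOrder (M i)]
    (u v : N) (x : M u) (y : M v) :
    (toLex ⟨u, x⟩ : Σₗ i, M i) < toLex ⟨v, y⟩ ↔ (u < v ∨ ∃ h : u = v, h ▸ x < y) :=
  Sigma.Lex.lt_def

lemma lex_eq_iff {M : N → Type u}
    (u v : N) (x : M u) (y : M v) :
    (toLex ⟨u, x⟩ : Σₗ i, M i) = toLex ⟨v, y⟩ ↔ ∃ h : u = v, h ▸ x = y := by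
  constructor
  · intro hxy
    have h2 : (⟨u, x⟩ : Σ i, M i) = ⟨v, y⟩ := hxy
    obtain ⟨h, hh⟩ := Sigma.mk.inj_iff.mp h2
    subst h
    exact ⟨rfl, eq_of_heq hh⟩
  · rintro ⟨h, hxy⟩
    subst h
    exact congrArg (fun z : M u => toLex (⟨u, z⟩ : Σ i, M i)) hxy

lemma key_lt {M M' : N → Type u} [∀ i, LinearOrder (M i)] [∀ i, LinearOrder (M' i)]
    (c : N → ℕ) (d : ∀ i, Fin (c i) → M i) (d' : ∀ i, Fin (c i) → M' i)
    {u v : N} (h : u = v) (x : Fin (c u)) (y : Fin (c v))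
    (hbase : ∀ a b : Fin (c v), (d v a < d v b ↔ d' v a < d' v b)) :
    ((h ▸ (d u x)) < d v y) ↔ ((h ▸ (d' u x)) < d' v y) := by
  subst h
  exact hbase x y

lemma key_eq {M M' : N → Type u}
    (c : N → ℕ) (d : ∀ i, Fin (c i) → M i) (d' : ∀ i, Fin (c i) → M' i)
    {u v : N} (h : u = v) (x : Fin (c u)) (y : Fin (c v))
    (hbase : ∀ a b : Fin (c v), (d v a = d v b ↔ d' v a = d' v b)) :
    ((h ▸ (d u x)) = d v y) ↔ ((h ▸ (d' u x)) = d' v y) := by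
  subst h
  exact hbase x y

variable [DecidableEq N]

def bump (c : N → ℕ) (i₀ : N) (i : N) : ℕ := if i = i₀ then c i + 1 else c i

lemma bump_self (c : N → ℕ) (i₀ : N) : bump c i₀ i₀ = c i₀ + 1 := if_pos rfl

lemma bump_ne (c : N → ℕ) {i i₀ : N} (h : i ≠ i₀) : bump c i₀ i = c i := if_neg h

def bumpD {M : N → Type u} (c : N → ℕ) (d : ∀ i, Fin (c i) → M i) (i₀ : N) (a₀ : M i₀) :
    ∀ i, Fin (bump c i₀ i) → M i :=
  fun i => if h : i = i₀ then
      fun j => (Fin.cons (cast (congrArg M h.symm) a₀) (d i) : Fin (c i + 1) → M i)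
        (Fin.cast (by rw [bump, if_pos h]) j)
    else fun j => d i (Fin.cast (bump_ne c h) j)

lemma bumpD_self {M : N → Type u} (c : N → ℕ) (d : ∀ i, Fin (c i) → M i) (i₀ : N) (a₀ : M i₀) :
    bumpD c d i₀ a₀ i₀ = (Fin.cons a₀ (d i₀)) ∘ Fin.cast (bump_self c i₀) := by
  funext j
  simp only [bumpD, dif_pos rfl]
  rfl

lemma bumpD_ne {M : N → Type u} (c : N → ℕ) (d : ∀ i, Fin (c i) → M i) {i₀ : N} (a₀ : M i₀)
    {i : N} (h : i ≠ i₀) : bumpD c d i₀ a₀ i = (d i) ∘ Fin.cast (bump_ne c h) := by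
  funext j
  simp only [bumpD, dif_neg h]
  rfl

/-- location/position data extended by a new element in summand `i₀`. -/
def epFun (c : N → ℕ) {k : ℕ} (ι : Fin k → N) (pos : ∀ j, Fin (c (ι j))) (i₀ : N) :
    Fin (k+1) → Σ i : N, Fin (bump c i₀ i) :=
  Fin.cons ⟨i₀, Fin.cast (bump_self c i₀).symm 0⟩
    (fun j => if h : ι j = i₀ then
        ⟨ι j, Fin.cast (by rw [h, bump_self]) ((Fin.cast (congrArg c h) (pos j)).succ)⟩
      else ⟨ι j, Fin.cast (bump_ne c h).symm (pos j)⟩)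

lemma step_assign {M : N → Type u}
    (c : N → ℕ) (d : ∀ i, Fin (c i) → M i) {k : ℕ} (ι : Fin k → N) (pos : ∀ j, Fin (c (ι j)))
    (i₀ : N) (a₀ : M i₀) :
    (fun j : Fin (k+1) =>
        toLex (⟨(epFun c ι pos i₀ j).1,
          bumpD c d i₀ a₀ (epFun c ι pos i₀ j).1 (epFun c ι pos i₀ j).2⟩ : Σ i, M i))
      = Fin.cons (toLex ⟨i₀, a₀⟩) (fun j => toLex ⟨ι j, d (ι j) (pos j)⟩) := by
  funext j
  refine Fin.cases ?_ ?_ j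
  · rw [Fin.cons_zero]
    rw [show epFun c ι pos i₀ 0 = ⟨i₀, Fin.cast (bump_self c i₀).symm 0⟩ from Fin.cons_zero _ _]
    refine congrArg (fun z : M i₀ => toLex (⟨i₀, z⟩ : Σ i, M i)) ?_
    rw [bumpD_self]
    have hidx : Fin.cast (bump_self c i₀) (Fin.cast (bump_self c i₀).symm 0) = (0 : Fin (c i₀ + 1)) := by
      ext; simp
    simp only [Function.comp_apply, hidx, Fin.cons_zero]
  · intro j
    rw [Fin.cons_succ]
    rw [show epFun c ι pos i₀ j.succ = _ from Fin.cons_succ _ _ j]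
    by_cases h : ι j = i₀
    · rw [dif_pos h]
      subst h
      refine congrArg (fun z : M (ι j) => toLex (⟨ι j, z⟩ : Σ i, M i)) ?_
      rw [bumpD_self]
      have hidx : Fin.cast (bump_self c (ι j))
          (Fin.cast (by rw [bump_self]) ((Fin.cast (congrArg c rfl) (pos j)).succ)) = (pos j).succ := by
        ext; simp
      simp only [Function.comp_apply, hidx, Fin.cons_succ]
    · rw [dif_neg h]
      refine congrArg (fun z : M (ι j) => toLex (⟨ι j, z⟩ : Σ i, M i)) ?_
      rw [bumpD_ne c d a₀ h]
      have hidx : Fin.cast (bump_ne c h) (Fin.cast (bump_ne c h).symm (pos j)) = pos j := by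
        ext; simp
      simp only [Function.comp_apply, hidx]


def liftP {m : ℕ} {M : N → Type u} (P : ∀ i, Fin m → Set (M i)) :
    Fin m → Set (Σₗ i, M i) :=
  fun p => {x | (ofLex x).2 ∈ P (ofLex x).1 p}

def restrS {M : N → Type u} {l : ℕ} (s : Fin l → Set (Σₗ i, M i)) (i : N) :
    Fin l → Set (M i) :=
  fun X => {x | toLex ⟨i, x⟩ ∈ s X}

omit [DecidableEq N] in
lemma main {m : ℕ} :
    ∀ {k l : ℕ} (φ : MSO m k l)
      (M₁ M₂ : N → Type u) [∀ i, LinearOrder (M₁ i)] [∀ i, LinearOrder (M₂ i)]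
      (P₁ : ∀ i, Fin m → Set (M₁ i)) (P₂ : ∀ i, Fin m → Set (M₂ i))
      (c : N → ℕ) (d₁ : ∀ i, Fin (c i) → M₁ i) (d₂ : ∀ i, Fin (c i) → M₂ i)
      (ι : Fin k → N) (pos : ∀ j, Fin (c (ι j)))
      (s₁ : Fin l → Set (Σₗ i, M₁ i)) (s₂ : Fin l → Set (Σₗ i, M₂ i)),
      (∀ i, Eqv (P₁ i) (P₂ i) φ.depth (d₁ i) (d₂ i) (restrS s₁ i) (restrS s₂ i)) →
      (φ.Sat (liftP P₁) (fun j => toLex ⟨ι j, d₁ (ι j) (pos j)⟩) s₁ ↔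
       φ.Sat (liftP P₂) (fun j => toLex ⟨ι j, d₂ (ι j) (pos j)⟩) s₂) := by
  intro k l φ
  induction φ with
  | lt i j =>
    intro M₁ M₂ inst1 inst2 P₁ P₂ c d₁ d₂ ι pos s₁ s₂ hSum
    show (toLex ⟨ι i, d₁ (ι i) (pos i)⟩ : Σₗ i, M₁ i) < toLex ⟨ι j, d₁ (ι j) (pos j)⟩ ↔
      (toLex ⟨ι i, d₂ (ι i) (pos i)⟩ : Σₗ i, M₂ i) < toLex ⟨ι j, d₂ (ι j) (pos j)⟩
    rw [lex_lt_iff, lex_lt_iff]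
    refine or_congr Iff.rfl (exists_congr fun h => ?_)
    exact key_lt c d₁ d₂ h (pos i) (pos j)
      (fun a b => hSum (ι j) (.lt a b) (Nat.zero_le _))
  | eq i j =>
    intro M₁ M₂ inst1 inst2 P₁ P₂ c d₁ d₂ ι pos s₁ s₂ hSum
    show (toLex ⟨ι i, d₁ (ι i) (pos i)⟩ : Σₗ i, M₁ i) = toLex ⟨ι j, d₁ (ι j) (pos j)⟩ ↔
      (toLex ⟨ι i, d₂ (ι i) (pos i)⟩ : Σₗ i, M₂ i) = toLex ⟨ι j, d₂ (ι j) (pos j)⟩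
    rw [lex_eq_iff, lex_eq_iff]
    refine exists_congr fun h => ?_
    exact key_eq c d₁ d₂ h (pos i) (pos j)
      (fun a b => hSum (ι j) (.eq a b) (Nat.zero_le _))
  | mem i X =>
    intro M₁ M₂ inst1 inst2 P₁ P₂ c d₁ d₂ ι pos s₁ s₂ hSum
    exact hSum (ι i) (.mem (pos i) X) (Nat.zero_le _)
  | pred p i =>
    intro M₁ M₂ inst1 inst2 P₁ P₂ c d₁ d₂ ι pos s₁ s₂ hSum
    exact hSum (ι i) (.pred p (pos i)) (Nat.zero_le _)
  | not ψ ihψ =>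
    intro M₁ M₂ inst1 inst2 P₁ P₂ c d₁ d₂ ι pos s₁ s₂ hSum
    exact not_congr (ihψ M₁ M₂ P₁ P₂ c d₁ d₂ ι pos s₁ s₂ hSum)
  | and ψ χ ihψ ihχ =>
    intro M₁ M₂ inst1 inst2 P₁ P₂ c d₁ d₂ ι pos s₁ s₂ hSum
    exact and_congr
      (ihψ M₁ M₂ P₁ P₂ c d₁ d₂ ι pos s₁ s₂ (fun i => (hSum i).mono (le_max_left _ _)))
      (ihχ M₁ M₂ P₁ P₂ c d₁ d₂ ι pos s₁ s₂ (fun i => (hSum i).mono (le_max_right _ _)))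
  | exElem ψ ihψ =>
    intro M₁ M₂ inst1 inst2 P₁ P₂ c d₁ d₂ ι pos s₁ s₂ hSum
    letI : DecidableEq N := Classical.decEq N
    constructor
    · rintro ⟨a, ha⟩
      rcases hxa : ofLex a with ⟨i₀, a₀⟩
      have haa : a = toLex ⟨i₀, a₀⟩ := by rw [← hxa]; rfl
      rw [haa] at ha
      obtain ⟨b₀, hb₀⟩ := extElem (hSum i₀) a₀
      refine ⟨toLex ⟨i₀, b₀⟩, ?_⟩
      have hyp' : ∀ i, Eqv (P₁ i) (P₂ i) ψ.depth
          (bumpD c d₁ i₀ a₀ i) (bumpD c d₂ i₀ b₀ i) (restrS s₁ i) (restrS s₂ i) := by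
        intro i
        by_cases h : i = i₀
        · subst h
          rw [bumpD_self, bumpD_self]
          exact Eqv.comp_cast (bump_self c i) hb₀
        · rw [bumpD_ne c d₁ a₀ h, bumpD_ne c d₂ b₀ h]
          exact Eqv.comp_cast (bump_ne c h) ((hSum i).mono (Nat.le_succ _))
      have hmain := ihψ M₁ M₂ P₁ P₂ (bump c i₀) (bumpD c d₁ i₀ a₀) (bumpD c d₂ i₀ b₀)
        (fun j => (epFun c ι pos i₀ j).1) (fun j => (epFun c ι pos i₀ j).2) s₁ s₂ hyp'
      rw [step_assign c d₁ ι pos i₀ a₀, step_assign c d₂ ι pos i₀ b₀] at hmain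
      exact hmain.mp ha
    · rintro ⟨b, hb⟩
      rcases hxb : ofLex b with ⟨i₀, b₀⟩
      have hbb : b = toLex ⟨i₀, b₀⟩ := by rw [← hxb]; rfl
      rw [hbb] at hb
      obtain ⟨a₀, ha₀⟩ := extElem (hSum i₀).symm b₀
      refine ⟨toLex ⟨i₀, a₀⟩, ?_⟩
      have hyp' : ∀ i, Eqv (P₁ i) (P₂ i) ψ.depth
          (bumpD c d₁ i₀ a₀ i) (bumpD c d₂ i₀ b₀ i) (restrS s₁ i) (restrS s₂ i) := by
        intro i
        by_cases h : i = i₀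
        · subst h
          rw [bumpD_self, bumpD_self]
          exact Eqv.comp_cast (bump_self c i) ha₀.symm
        · rw [bumpD_ne c d₁ a₀ h, bumpD_ne c d₂ b₀ h]
          exact Eqv.comp_cast (bump_ne c h) ((hSum i).mono (Nat.le_succ _))
      have hmain := ihψ M₁ M₂ P₁ P₂ (bump c i₀) (bumpD c d₁ i₀ a₀) (bumpD c d₂ i₀ b₀)
        (fun j => (epFun c ι pos i₀ j).1) (fun j => (epFun c ι pos i₀ j).2) s₁ s₂ hyp'
      rw [step_assign c d₁ ι pos i₀ a₀, step_assign c d₂ ι pos i₀ b₀] at hmain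
      exact hmain.mpr hb
  | exSet ψ ihψ =>
    intro M₁ M₂ inst1 inst2 P₁ P₂ c d₁ d₂ ι pos s₁ s₂ hSum
    constructor
    · rintro ⟨A, hA⟩
      choose B hB using fun i => extSet (hSum i) {x : M₁ i | toLex ⟨i, x⟩ ∈ A}
      refine ⟨{y : Σₗ i, M₂ i | (ofLex y).2 ∈ B (ofLex y).1}, ?_⟩
      have hr₁ : ∀ i, restrS (Fin.cons A s₁) i
          = Fin.cons {x : M₁ i | toLex ⟨i, x⟩ ∈ A} (restrS s₁ i) := by
        intro i; funext X
        refine Fin.cases ?_ ?_ X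
        · rw [Fin.cons_zero]; rfl
        · intro X; rw [Fin.cons_succ]; rfl
      have hr₂ : ∀ i, restrS (Fin.cons {y : Σₗ i, M₂ i | (ofLex y).2 ∈ B (ofLex y).1} s₂) i
          = Fin.cons (B i) (restrS s₂ i) := by
        intro i; funext X
        refine Fin.cases ?_ ?_ X
        · rw [Fin.cons_zero]; rfl
        · intro X; rw [Fin.cons_succ]; rfl
      have hmain := ihψ M₁ M₂ P₁ P₂ c d₁ d₂ ι pos (Fin.cons A s₁)
        (Fin.cons {y : Σₗ i, M₂ i | (ofLex y).2 ∈ B (ofLex y).1} s₂)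
        (fun i => by rw [hr₁ i, hr₂ i]; exact hB i)
      exact hmain.mp hA
    · rintro ⟨BB, hBB⟩
      choose A hA using fun i => extSet (hSum i).symm {y : M₂ i | toLex ⟨i, y⟩ ∈ BB}
      refine ⟨{x : Σₗ i, M₁ i | (ofLex x).2 ∈ A (ofLex x).1}, ?_⟩
      have hr₁ : ∀ i, restrS (Fin.cons {x : Σₗ i, M₁ i | (ofLex x).2 ∈ A (ofLex x).1} s₁) i
          = Fin.cons (A i) (restrS s₁ i) := by
        intro i; funext X
        refine Fin.cases ?_ ?_ X
        · rw [Fin.cons_zero]; rfl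
        · intro X; rw [Fin.cons_succ]; rfl
      have hr₂ : ∀ i, restrS (Fin.cons BB s₂) i
          = Fin.cons {y : M₂ i | toLex ⟨i, y⟩ ∈ BB} (restrS s₂ i) := by
        intro i; funext X
        refine Fin.cases ?_ ?_ X
        · rw [Fin.cons_zero]; rfl
        · intro X; rw [Fin.cons_succ]; rfl
      have hmain := ihψ M₁ M₂ P₁ P₂ c d₁ d₂ ι pos
        (Fin.cons {x : Σₗ i, M₁ i | (ofLex x).2 ∈ A (ofLex x).1} s₁) (Fin.cons BB s₂)
        (fun i => by rw [hr₁ i, hr₂ i]; exact (hA i).symm)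
      exact hmain.mpr hBB

end Main

end OSC

/-- (Shelah, Lemma 2.3(A), basic composition theorem for ordered sums.) If two ordered
sums over the same index order `N` have summands that are pairwise equivalent for
monadic sentences of quantifier depth `≤ n`, then the sums are equivalent for monadic
sentences of quantifier depth `≤ n`. -/
theorem ordered_sum_composition
    (N : Type) [LinearOrder N] (m n : ℕ)
    (M₁ M₂ : N → Type) [∀ i, LinearOrder (M₁ i)] [∀ i, LinearOrder (M₂ i)]
    (P₁ : ∀ i, Fin m → Set (M₁ i)) (P₂ : ∀ i, Fin m → Set (M₂ i))
    (h : ∀ i : N, ∀ φ : MSO m 0 0, φ.depth ≤ n →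
      (MSO.SatS (P₁ i) φ ↔ MSO.SatS (P₂ i) φ)) :
    ∀ φ : MSO m 0 0, φ.depth ≤ n →
      (MSO.SatS (α := Σₗ i, M₁ i)
          (fun k => {x : Σₗ i, M₁ i | (ofLex x).2 ∈ P₁ (ofLex x).1 k}) φ ↔
       MSO.SatS (α := Σₗ i, M₂ i)
          (fun k => {x : Σₗ i, M₂ i | (ofLex x).2 ∈ P₂ (ofLex x).1 k}) φ) := by
  intro φ hd
  have hyp : ∀ i, OSC.Eqv (P₁ i) (P₂ i) φ.depth
      (fun j : Fin 0 => j.elim0) (fun j : Fin 0 => j.elim0)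
      (OSC.restrS (fun X : Fin 0 => X.elim0) i) (OSC.restrS (fun X : Fin 0 => X.elim0) i) := by
    intro i ψ hle
    have hr : ∀ (M : N → Type) (i : N),
        OSC.restrS (M := M) (fun X : Fin 0 => X.elim0) i = (fun X : Fin 0 => X.elim0) :=
      fun M i => funext fun X => X.elim0
    rw [hr M₁ i, hr M₂ i]
    exact h i ψ (hle.trans hd)
  have hmain := OSC.main φ M₁ M₂ P₁ P₂ (fun _ => 0)
    (fun i (j : Fin 0) => j.elim0) (fun i (j : Fin 0) => j.elim0)
    (fun j : Fin 0 => j.elim0) (fun j : Fin 0 => j.elim0)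
    (fun X : Fin 0 => X.elim0) (fun X : Fin 0 => X.elim0) hyp
  unfold MSO.SatS
  convert hmain using 2 <;> first
    | rfl
    | (funext j; exact j.elim0)
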